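/- If C is a connected graph of even order with no perfect matching, v a vertex of C, S a vertex subset of a graph G containing C as an S-component, and S' = S ∪ {v}, then df(S') ≥ df(S) and Df(S') < Df(S). -/

import Mathlib

open SimpleGraph Set

variable {V : Type*} [Fintype V] [DecidableEq V]

/-- The vertex set (in `V`) of a connected component of the graph induced on `B`. -/
def compSupp (G : SimpleGraph V) (B : Set V)
    (c : (G.induce B).ConnectedComponent) : Set V :=
  Subtype.val '' c.supp

/-- `A` is (the vertex set of) a connected component of `G` restricted to `B`. -/
def IsCompOf (G : SimpleGraph V) (B : Set V) (A : Set V) : Prop :=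
  ∃ c : (G.induce B).ConnectedComponent, A = compSupp G B c

/-- The number of odd connected components of `G` restricted to `B`. -/
noncomputable def oddComps (G : SimpleGraph V) (B : Set V) : ℕ :=
  Set.ncard {c : (G.induce B).ConnectedComponent | Odd (compSupp G B c).ncard}

/-- The deficiency `df(S) = od(S) - |S|`. -/
noncomputable def df (G : SimpleGraph V) (S : Set V) : ℤ :=
  (oddComps G Sᶜ : ℤ) - S.ncard

/-- The induced subgraph on `A` has a perfect matching. -/
def HasPM (G : SimpleGraph V) (A : Set V) : Prop :=
  ∃ M : Subgraph (G.induce A), M.IsPerfectMatching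

/-- `Df(S)`: total number of vertices in components of `G - S` with no perfect matching. -/
noncomputable def Df (G : SimpleGraph V) (S : Set V) : ℕ :=
  Set.ncard (⋃ c ∈ {c : (G.induce Sᶜ).ConnectedComponent |
    ¬ HasPM G (compSupp G Sᶜ c)}, compSupp G Sᶜ c)

/-- The set of `M`-exposed vertices. -/
def exposed (G : SimpleGraph V) (M : Subgraph G) : Set V :=
  {v | v ∉ M.support}

/-- `A` induces a factor-critical graph. -/
def FactorCritical (G : SimpleGraph V) (A : Set V) : Prop :=
  ∀ v ∈ A, HasPM G (A \ {v})

/-- The neighborhood of `T ⊆ S` in the bipartite minor `⟨G,S⟩`: the odd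
`S`-components adjacent to some vertex of `T`. -/
def minorNbhd (G : SimpleGraph V) (S T : Set V) :
    Set (G.induce Sᶜ).ConnectedComponent :=
  {c | Odd (compSupp G Sᶜ c).ncard ∧ ∃ u ∈ T, ∃ w ∈ compSupp G Sᶜ c, G.Adj u w}

/-- `S` is a Gallai-Edmonds set of `G`. -/
def GallaiEdmonds (G : SimpleGraph V) (S : Set V) : Prop :=
  (∀ c : (G.induce Sᶜ).ConnectedComponent,
      Even (compSupp G Sᶜ c).ncard → HasPM G (compSupp G Sᶜ c)) ∧
  (∀ c : (G.induce Sᶜ).ConnectedComponent,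
      Odd (compSupp G Sᶜ c).ncard → FactorCritical G (compSupp G Sᶜ c)) ∧
  (∀ T ⊆ S, T.Nonempty → T.ncard + 1 ≤ (minorNbhd G S T).ncard)

/-- `w` and `w'` lie in the same `S`-component. -/
def SameComp (G : SimpleGraph V) (S : Set V) (w w' : V) : Prop :=
  ∃ c : (G.induce Sᶜ).ConnectedComponent,
    w ∈ compSupp G Sᶜ c ∧ w' ∈ compSupp G Sᶜ c

/-- `M` is a maximum matching of `G`. -/
def IsMaximumMatching (G : SimpleGraph V) (M : Subgraph G) : Prop :=
  M.IsMatching ∧ ∀ M' : Subgraph G, M'.IsMatching →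
    M'.edgeSet.ncard ≤ M.edgeSet.ncard
set_option linter.unusedSectionVars false

lemma mem_compSupp {G : SimpleGraph V} {B : Set V} {c : (G.induce B).ConnectedComponent}
    {x : V} : x ∈ compSupp G B c ↔ ∃ h : x ∈ B, (G.induce B).connectedComponentMk ⟨x, h⟩ = c := by
  constructor
  · rintro ⟨⟨y, hy⟩, hyc, rfl⟩
    exact ⟨hy, hyc⟩
  · rintro ⟨h, hc⟩
    exact ⟨⟨x, h⟩, hc, rfl⟩

lemma compSupp_subset (G : SimpleGraph V) (B : Set V) (c : (G.induce B).ConnectedComponent) :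
    compSupp G B c ⊆ B := by
  rintro x ⟨⟨y, hy⟩, _, rfl⟩; exact hy

lemma compSupp_nonempty (G : SimpleGraph V) (B : Set V) (c : (G.induce B).ConnectedComponent) :
    (compSupp G B c).Nonempty := by
  induction c using SimpleGraph.ConnectedComponent.ind with
  | _ x => exact ⟨x.1, mem_compSupp.2 ⟨x.2, by rfl⟩⟩

lemma compSupp_eq_of_mem {G : SimpleGraph V} {B : Set V} {c c' : (G.induce B).ConnectedComponent}
    {x : V} (h : x ∈ compSupp G B c) (h' : x ∈ compSupp G B c') : c = c' := by
  obtain ⟨hx, rfl⟩ := mem_compSupp.1 h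
  obtain ⟨hx', rfl⟩ := mem_compSupp.1 h'
  rfl

/-- inclusion hom between induced graphs -/
def incHom (G : SimpleGraph V) {B' B : Set V} (h : B' ⊆ B) : G.induce B' →g G.induce B where
  toFun := fun x => ⟨x.1, h x.2⟩
  map_rel' := fun hadj => hadj
set_option linter.unusedSectionVars false

lemma walk_descend {G : SimpleGraph V} {B : Set V} {v : ↥B} :
    ∀ {x y : ↥B}, (G.induce B).Walk x y → ¬ (G.induce B).Reachable x v →
    ∃ (hx : x.1 ∈ B \ {v.1}) (hy : y.1 ∈ B \ {v.1}),
      (G.induce (B \ {v.1})).Reachable ⟨x.1, hx⟩ ⟨y.1, hy⟩ := by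
  intro x y p
  induction p with
  | nil =>
    rename_i u
    intro hxv
    have hx : u.1 ∈ B \ {v.1} := ⟨u.2, fun h => hxv (by rw [Subtype.ext h])⟩
    exact ⟨hx, hx, Reachable.refl _⟩
  | cons h p ih =>
    rename_i a b y'
    intro hxv
    have hbv : ¬ (G.induce B).Reachable b v := fun hr => hxv (h.reachable.trans hr)
    obtain ⟨hb, hy, hr⟩ := ih hbv
    have ha : a.1 ∈ B \ {v.1} := ⟨a.2, fun hav => hxv (by rw [Subtype.ext hav])⟩
    refine ⟨ha, hy, ?_⟩
    have hadj : (G.induce (B \ {v.1})).Adj ⟨a.1, ha⟩ ⟨b.1, hb⟩ := h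
    exact hadj.reachable.trans hr

def pimap (G : SimpleGraph V) (B : Set V) (v : V) :
    (G.induce (B \ {v})).ConnectedComponent → (G.induce B).ConnectedComponent :=
  ConnectedComponent.map (incHom G diff_subset)

lemma pimap_mk {G : SimpleGraph V} {B : Set V} {v : V} (x : ↥(B \ {v})) :
    pimap G B v ((G.induce (B \ {v})).connectedComponentMk x)
      = (G.induce B).connectedComponentMk ⟨x.1, x.2.1⟩ :=
  ConnectedComponent.map_mk _ _

lemma compSupp_pimap_subset (G : SimpleGraph V) (B : Set V) (v : V)
    (d : (G.induce (B \ {v})).ConnectedComponent) :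
    compSupp G (B \ {v}) d ⊆ compSupp G B (pimap G B v d) := by
  intro x hx
  obtain ⟨hx', rfl⟩ := mem_compSupp.1 hx
  exact mem_compSupp.2 ⟨hx'.1, (pimap_mk ⟨x, hx'⟩).symm⟩

lemma compSupp_pimap_eq {G : SimpleGraph V} {B : Set V} {v : V} (hvB : v ∈ B)
    (d : (G.induce (B \ {v})).ConnectedComponent)
    (h : pimap G B v d ≠ (G.induce B).connectedComponentMk ⟨v, hvB⟩) :
    compSupp G (B \ {v}) d = compSupp G B (pimap G B v d) := by
  refine Subset.antisymm (compSupp_pimap_subset G B v d) ?_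
  obtain ⟨x, hx⟩ := compSupp_nonempty G (B \ {v}) d
  obtain ⟨hx', hmk⟩ := mem_compSupp.1 hx
  intro y hy
  obtain ⟨hyB, hymk⟩ := mem_compSupp.1 hy
  -- x and y are reachable in induce B
  have hmkB : (G.induce B).connectedComponentMk ⟨x, hx'.1⟩ = pimap G B v d := by
    rw [← hmk]; exact (pimap_mk ⟨x, hx'⟩).symm
  have hreach : (G.induce B).Reachable ⟨x, hx'.1⟩ ⟨y, hyB⟩ := by
    rw [← ConnectedComponent.eq, hmkB, hymk]
  have hnv : ¬ (G.induce B).Reachable ⟨x, hx'.1⟩ (⟨v, hvB⟩ : ↥B) := by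
    intro hr
    exact h (by rw [← hmkB, ConnectedComponent.eq]; exact hr)
  obtain ⟨p⟩ := hreach
  obtain ⟨hx2, hy2, hr2⟩ := walk_descend (v := ⟨v, hvB⟩) p hnv
  refine mem_compSupp.2 ⟨hy2, ?_⟩
  rw [← hmk, ConnectedComponent.eq]
  exact hr2.symm

lemma compSupp_fiber {G : SimpleGraph V} {B : Set V} {v : V} (hvB : v ∈ B)
    (d : (G.induce (B \ {v})).ConnectedComponent)
    (h : pimap G B v d = (G.induce B).connectedComponentMk ⟨v, hvB⟩) :
    compSupp G (B \ {v}) d ⊆ compSupp G B (pimap G B v d) \ {v} := by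
  intro x hx
  refine ⟨compSupp_pimap_subset G B v d hx, ?_⟩
  have := (mem_compSupp.1 hx).choose
  exact fun hxv => this.2 hxv

lemma exists_lift {G : SimpleGraph V} {B : Set V} {v : V} (hvB : v ∈ B)
    (c : (G.induce B).ConnectedComponent)
    (h : c ≠ (G.induce B).connectedComponentMk ⟨v, hvB⟩) :
    ∃ d, pimap G B v d = c ∧ compSupp G (B \ {v}) d = compSupp G B c := by
  obtain ⟨x, hx⟩ := compSupp_nonempty G B c
  obtain ⟨hxB, hmk⟩ := mem_compSupp.1 hx
  have hxv : x ≠ v := by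
    rintro rfl
    exact h (by rw [← hmk])
  refine ⟨(G.induce (B \ {v})).connectedComponentMk ⟨x, hxB, hxv⟩, ?_, ?_⟩
  · rw [pimap_mk]; exact hmk
  · rw [compSupp_pimap_eq hvB _ (by rw [pimap_mk, hmk]; exact h), pimap_mk, hmk]

lemma compSupp_disjoint {G : SimpleGraph V} {B : Set V} {c c' : (G.induce B).ConnectedComponent}
    (h : c ≠ c') : Disjoint (compSupp G B c) (compSupp G B c') :=
  Set.disjoint_left.2 fun _ hx hx' => h (compSupp_eq_of_mem hx hx')

lemma even_ncard_biUnion {ι : Type*} [DecidableEq ι] (t : Finset ι) (f : ι → Set V)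
    (hd : ∀ i ∈ t, ∀ j ∈ t, i ≠ j → Disjoint (f i) (f j))
    (he : ∀ i ∈ t, Even (f i).ncard) : Even (⋃ i ∈ t, f i).ncard := by
  classical
  induction t using Finset.induction with
  | empty => simp
  | insert a s ha ih =>
    rw [Finset.set_biUnion_insert]
    have hdisj : Disjoint (f a) (⋃ i ∈ s, f i) := by
      refine Set.disjoint_iUnion₂_right.2 fun i hi => ?_
      exact hd a (Finset.mem_insert_self a s) i (Finset.mem_insert_of_mem hi)
        (fun h => ha (h ▸ hi))
    rw [Set.ncard_union_eq hdisj (Set.toFinite _) (Set.toFinite _)]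
    exact (he a (Finset.mem_insert_self a s)).add
      (ih (fun i hi j hj hij => hd i (Finset.mem_insert_of_mem hi) j
        (Finset.mem_insert_of_mem hj) hij)
        (fun i hi => he i (Finset.mem_insert_of_mem hi)))

lemma fiber_union {G : SimpleGraph V} {B : Set V} {v : V} (hvB : v ∈ B) :
    (⋃ d ∈ {d : (G.induce (B \ {v})).ConnectedComponent |
        pimap G B v d = (G.induce B).connectedComponentMk ⟨v, hvB⟩}, compSupp G (B \ {v}) d)
      = compSupp G B ((G.induce B).connectedComponentMk ⟨v, hvB⟩) \ {v} := by
  apply Subset.antisymm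
  · refine Set.iUnion₂_subset fun d hd => ?_
    have := compSupp_fiber hvB d hd
    rwa [hd] at this
  · rintro x ⟨hx, hxv⟩
    obtain ⟨hxB, hmk⟩ := mem_compSupp.1 hx
    have hxv' : x ≠ v := hxv
    refine Set.mem_iUnion₂.2 ⟨(G.induce (B \ {v})).connectedComponentMk ⟨x, hxB, hxv'⟩, ?_, ?_⟩
    · show pimap G B v _ = _
      rw [pimap_mk]; exact hmk
    · exact mem_compSupp.2 ⟨⟨hxB, hxv'⟩, rfl⟩

lemma exists_odd_fiber {G : SimpleGraph V} {B : Set V} {v : V} (hvB : v ∈ B)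
    (hodd : Odd ((compSupp G B ((G.induce B).connectedComponentMk ⟨v, hvB⟩) \ {v}).ncard)) :
    ∃ d : (G.induce (B \ {v})).ConnectedComponent,
      pimap G B v d = (G.induce B).connectedComponentMk ⟨v, hvB⟩ ∧
      Odd (compSupp G (B \ {v}) d).ncard := by
  classical
  by_contra hcon
  push_neg at hcon
  rw [← fiber_union hvB] at hodd
  have hfin : {d : (G.induce (B \ {v})).ConnectedComponent |
      pimap G B v d = (G.induce B).connectedComponentMk ⟨v, hvB⟩}.Finite := Set.toFinite _
  rw [show (⋃ d ∈ {d : (G.induce (B \ {v})).ConnectedComponent |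
      pimap G B v d = (G.induce B).connectedComponentMk ⟨v, hvB⟩}, compSupp G (B \ {v}) d)
      = ⋃ d ∈ hfin.toFinset, compSupp G (B \ {v}) d by
    simp [Set.Finite.mem_toFinset]] at hodd
  have := even_ncard_biUnion hfin.toFinset (compSupp G (B \ {v}))
    (fun i _ j _ hij => compSupp_disjoint hij)
    (fun i hi => by
      have hmem := hfin.mem_toFinset.1 hi
      exact Nat.not_odd_iff_even.1 (hcon i hmem))
  exact Nat.not_odd_iff_even.2 this hodd


lemma main_lemma {G : SimpleGraph V} {B A : Set V} {v : V}
    (hC : ∃ c : (G.induce B).ConnectedComponent, A = compSupp G B c)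
    (hEven : Even A.ncard) (hnpm : ¬ HasPM G A) (hv : v ∈ A) :
    oddComps G B + 1 ≤ oddComps G (B \ {v}) ∧
    (⋃ d ∈ {d : (G.induce (B \ {v})).ConnectedComponent |
        ¬ HasPM G (compSupp G (B \ {v}) d)}, compSupp G (B \ {v}) d).ncard <
    (⋃ c ∈ {c : (G.induce B).ConnectedComponent |
        ¬ HasPM G (compSupp G B c)}, compSupp G B c).ncard := by
  classical
  obtain ⟨c, rfl⟩ := hC
  have hvB : v ∈ B := compSupp_subset G B c hv
  have hc₀ : (G.induce B).connectedComponentMk ⟨v, hvB⟩ = c := (mem_compSupp.1 hv).choose_spec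
  set c₀ := (G.induce B).connectedComponentMk ⟨v, hvB⟩ with hc₀def
  rw [← hc₀] at hEven hnpm hv
  constructor
  · -- odd components part
    have hAvodd : Odd ((compSupp G B c₀ \ {v}).ncard) := by
      have h1 := Set.ncard_diff_singleton_add_one hv (Set.toFinite _)
      rw [← h1] at hEven
      rcases Nat.even_add_one.1 hEven with h2
      exact Nat.not_even_iff_odd.1 h2
    obtain ⟨d₁, hd₁, hd₁odd⟩ := exists_odd_fiber hvB hAvodd
    set f : (G.induce B).ConnectedComponent → (G.induce (B \ {v})).ConnectedComponent :=
      fun c' => if h : c' = c₀ then d₁ else Classical.choose (exists_lift hvB c' h) with hf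
    have hfsupp : ∀ c', (h : c' ≠ c₀) → compSupp G (B \ {v}) (f c') = compSupp G B c' := by
      intro c' h
      rw [hf]; simp only [dif_neg h]
      exact (Classical.choose_spec (exists_lift hvB c' h)).2
    have hfpi : ∀ c', pimap G B v (f c') = if c' = c₀ then c₀ else c' := by
      intro c'
      by_cases h : c' = c₀
      · simp only [hf, dif_pos h, if_pos h, hd₁]; rfl
      · simp only [hf, dif_neg h, if_neg h]
        exact (Classical.choose_spec (exists_lift hvB c' h)).1
    have hinj : Function.Injective f := by
      intro a b hab
      have hthis := congrArg (pimap G B v) hab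
      rw [hfpi, hfpi] at hthis
      by_cases ha : a = c₀ <;> by_cases hb : b = c₀
      · rw [ha, hb]
      · rw [if_pos ha, if_neg hb] at hthis
        exact absurd hthis.symm hb
      · rw [if_neg ha, if_pos hb] at hthis
        exact absurd hthis ha
      · rwa [if_neg ha, if_neg hb] at hthis
    have hc₀even : ¬ Odd (compSupp G B c₀).ncard := by
      rw [← Nat.not_even_iff_odd]; push_neg; exact hEven
    have hstep : (insert c₀ {c' : (G.induce B).ConnectedComponent |
        Odd (compSupp G B c').ncard}).ncard ≤ oddComps G (B \ {v}) := by
      apply Set.ncard_le_ncard_of_injOn f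
      · intro a ha
        rcases ha with ha | ha
        · show Odd (compSupp G (B \ {v}) (f a)).ncard
          simp only [hf, dif_pos ha]
          exact hd₁odd
        · show Odd (compSupp G (B \ {v}) (f a)).ncard
          by_cases h : a = c₀
          · exact absurd (h ▸ ha) hc₀even
          · rw [hfsupp a h]; exact ha
      · exact hinj.injOn
    have hnm : c₀ ∉ {c' : (G.induce B).ConnectedComponent |
        Odd (compSupp G B c').ncard} := hc₀even
    rw [Set.ncard_insert_of_notMem hnm (Set.toFinite _)] at hstep
    unfold oddComps
    exact hstep
  · -- Df part
    have hsub : (⋃ d ∈ {d : (G.induce (B \ {v})).ConnectedComponent |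
        ¬ HasPM G (compSupp G (B \ {v}) d)}, compSupp G (B \ {v}) d) ⊆
        (⋃ c' ∈ {c' : (G.induce B).ConnectedComponent |
        ¬ HasPM G (compSupp G B c')}, compSupp G B c') \ {v} := by
      rintro x hx
      obtain ⟨d, hd, hxd⟩ := Set.mem_iUnion₂.1 hx
      have hxv : x ≠ v := (mem_compSupp.1 hxd).choose.2
      refine ⟨?_, hxv⟩
      by_cases h : pimap G B v d = c₀
      · have := compSupp_fiber hvB d h
        rw [h] at this
        exact Set.mem_iUnion₂.2 ⟨c₀, hnpm, (this hxd).1⟩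
      · have heq := compSupp_pimap_eq hvB d h
        refine Set.mem_iUnion₂.2 ⟨pimap G B v d, ?_, heq ▸ hxd⟩
        show ¬ HasPM G (compSupp G B (pimap G B v d))
        rw [← heq]; exact hd
    calc (⋃ d ∈ {d : (G.induce (B \ {v})).ConnectedComponent |
        ¬ HasPM G (compSupp G (B \ {v}) d)}, compSupp G (B \ {v}) d).ncard
        ≤ ((⋃ c' ∈ {c' : (G.induce B).ConnectedComponent |
        ¬ HasPM G (compSupp G B c')}, compSupp G B c') \ {v}).ncard :=
          Set.ncard_le_ncard hsub (Set.toFinite _)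
      _ < _ := by
          apply Set.ncard_diff_singleton_lt_of_mem _ (Set.toFinite _)
          exact Set.mem_iUnion₂.2 ⟨c₀, hnpm, hv⟩


/-- Adding a vertex of an even `S`-component with no perfect matching to `S`
does not decrease the deficiency and strictly decreases `Df`. -/
theorem stmt_5 (G : SimpleGraph V) (S A : Set V) (v : V)
    (hC : IsCompOf G Sᶜ A) (hEven : Even A.ncard)
    (hnpm : ¬ HasPM G A) (hv : v ∈ A) :
    df G S ≤ df G (insert v S) ∧ Df G (insert v S) < Df G S := by
  have hins : (insert v S)ᶜ = Sᶜ \ {v} := by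
    ext x; simp [not_or, and_comm]
  have hvS : v ∉ S := by
    obtain ⟨c, hA⟩ := hC
    exact (compSupp_subset G Sᶜ c (hA ▸ hv))
  obtain ⟨h1, h2⟩ := main_lemma hC hEven hnpm hv
  constructor
  · unfold df
    rw [hins, Set.ncard_insert_of_notMem hvS (Set.toFinite _)]
    push_cast
    omega
  · unfold Df
    rw [hins]
    exact h2
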